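/- For any t ≥ 1, the Koszul-type complex 0 → R^{n−1} → R^n → R → R/I_{n,t} → 0, where the first map sends the j-th basis vector to (−x_1^t, 0, …, 0, x_{j+1}^t, 0, …, 0) and the second map sends the i-th basis vector to x^{e_i}, is exact; hence R/I_{n,t} has projective dimension at most 2. -/

import Mathlib

open MvPolynomial Finset

private lemma primeX_aux {k : Type*} [Field k] (m : ℕ) (i : Fin (m + 1)) :
    Prime (X i : MvPolynomial (Fin (m + 1)) k) := by
  have h0 : Prime (X (0 : Fin (m + 1)) : MvPolynomial (Fin (m + 1)) k) := by
    rw [← MulEquiv.prime_iff (finSuccEquiv k m).toRingEquiv.toMulEquiv]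
    simpa [finSuccEquiv_X_zero] using (Polynomial.prime_X :
      Prime (Polynomial.X : Polynomial (MvPolynomial (Fin m) k)))
  rw [← MulEquiv.prime_iff (renameEquiv k (Equiv.swap i 0)).toRingEquiv.toMulEquiv]
  simpa [renameEquiv_apply, rename_X, Equiv.swap_apply_left] using h0

private lemma primeX {k : Type*} [Field k] {n : ℕ} (i : Fin n) :
    Prime (X i : MvPolynomial (Fin n) k) := by
  obtain ⟨m, rfl⟩ : ∃ m, n = m + 1 := ⟨n - 1, by have := i.pos; omega⟩
  exact primeX_aux m i

private noncomputable def Mmat (k : Type*) [Field k] (n t : ℕ) (hn : 3 ≤ n) :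
    Matrix (Fin n) (Fin (n - 1)) (MvPolynomial (Fin n) k) :=
  Matrix.of fun (i : Fin n) (j : Fin (n - 1)) =>
    if (i : ℕ) = 0 then -((X (⟨0, by omega⟩ : Fin n) : MvPolynomial (Fin n) k) ^ t)
    else if (i : ℕ) = (j : ℕ) + 1 then (X i : MvPolynomial (Fin n) k) ^ t
    else 0

private noncomputable def psiMap (k : Type*) [Field k] (n t : ℕ) :
    (Fin n → MvPolynomial (Fin n) k) →ₗ[MvPolynomial (Fin n) k] MvPolynomial (Fin n) k :=
  ∑ i : Fin n, LinearMap.smulRight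
    (LinearMap.proj i : (Fin n → MvPolynomial (Fin n) k) →ₗ[MvPolynomial (Fin n) k] MvPolynomial (Fin n) k)
    (∏ j ∈ Finset.univ.erase i, (X j : MvPolynomial (Fin n) k) ^ t)

private lemma psi_apply {k : Type*} [Field k] {n t : ℕ} (v : Fin n → MvPolynomial (Fin n) k) :
    psiMap k n t v = ∑ i : Fin n, v i * ∏ j ∈ Finset.univ.erase i, (X j : MvPolynomial (Fin n) k) ^ t := by
  simp [psiMap, LinearMap.sum_apply, smul_eq_mul]

private lemma rowsucc {k : Type*} [Field k] {n t : ℕ} (hn : 3 ≤ n) (c : Fin (n - 1) → MvPolynomial (Fin n) k) (i : Fin n)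
    (hi : (i : ℕ) ≠ 0) :
    Matrix.toLin' (Mmat k n t hn) c i
      = (X i : MvPolynomial (Fin n) k) ^ t * c ⟨(i : ℕ) - 1, by have := i.isLt; omega⟩ := by
  rw [Matrix.toLin'_apply]
  show ∑ j : Fin (n - 1), Mmat k n t hn i j * c j = _
  rw [Finset.sum_eq_single (⟨(i : ℕ) - 1, by have := i.isLt; omega⟩ : Fin (n - 1))]
  · rw [Mmat, Matrix.of_apply, if_neg hi, if_pos (by simp; omega)]
  · intro j _ hj
    rw [Mmat, Matrix.of_apply, if_neg hi, if_neg, zero_mul]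
    intro h
    exact hj (Fin.ext (by simp; omega))
  · intro h; exact absurd (mem_univ _) h

private lemma rowzero {k : Type*} [Field k] {n t : ℕ} (hn : 3 ≤ n) (c : Fin (n - 1) → MvPolynomial (Fin n) k) :
    Matrix.toLin' (Mmat k n t hn) c ⟨0, by omega⟩
      = -((X (⟨0, by omega⟩ : Fin n) : MvPolynomial (Fin n) k) ^ t) * ∑ j, c j := by
  rw [Matrix.toLin'_apply]
  show ∑ j : Fin (n - 1), Mmat k n t hn ⟨0, by omega⟩ j * c j = _
  rw [Finset.mul_sum]
  refine Finset.sum_congr rfl fun j _ => ?_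
  rw [Mmat, Matrix.of_apply, if_pos rfl]

private lemma Pprod {k : Type*} [Field k] {n t : ℕ} (i : Fin n) :
    (X i : MvPolynomial (Fin n) k) ^ t * ∏ j ∈ Finset.univ.erase i, (X j : MvPolynomial (Fin n) k) ^ t
      = ∏ j : Fin n, (X j : MvPolynomial (Fin n) k) ^ t :=
  Finset.mul_prod_erase univ (fun j => (X j : MvPolynomial (Fin n) k) ^ t) (mem_univ i)

private lemma notdvd {k : Type*} [Field k] {n t : ℕ} (i : Fin n) :
    ¬ (X i : MvPolynomial (Fin n) k) ∣ ∏ j ∈ Finset.univ.erase i, (X j : MvPolynomial (Fin n) k) ^ t := by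
  intro hd
  obtain ⟨l, hl, hdl⟩ := ((primeX i).dvd_finset_prod_iff _).mp hd
  have h := X_dvd_X.mp ((primeX i).dvd_of_dvd_pow hdl)
  exact (mem_erase.mp hl).1 h.symm

private lemma key {k : Type*} [Field k] {n t : ℕ} (hn : 3 ≤ n)
    (c : Fin (n - 1) → MvPolynomial (Fin n) k) (v : Fin n → MvPolynomial (Fin n) k)
    (hv : ∀ i : Fin n, (i : ℕ) ≠ 0 →
      v i = (X i : MvPolynomial (Fin n) k) ^ t * c ⟨(i : ℕ) - 1, by have := i.isLt; omega⟩) :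
    ∑ i : Fin n, v i * ∏ j ∈ Finset.univ.erase i, (X j : MvPolynomial (Fin n) k) ^ t
      = (v ⟨0, by omega⟩ + (X (⟨0, by omega⟩ : Fin n) : MvPolynomial (Fin n) k) ^ t * ∑ j, c j)
          * ∏ j ∈ Finset.univ.erase (⟨0, by omega⟩ : Fin n), (X j : MvPolynomial (Fin n) k) ^ t := by
  rw [← Finset.add_sum_erase _ _ (mem_univ (⟨0, by omega⟩ : Fin n))]
  have h2 : ∑ i ∈ Finset.univ.erase (⟨0, by omega⟩ : Fin n),
        v i * ∏ j ∈ Finset.univ.erase i, (X j : MvPolynomial (Fin n) k) ^ t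
      = ∑ jj : Fin (n - 1), c jj * ∏ j : Fin n, (X j : MvPolynomial (Fin n) k) ^ t := by
    refine Finset.sum_nbij' (fun i => (⟨(i : ℕ) - 1, by have := i.isLt; omega⟩ : Fin (n - 1)))
      (fun j => (⟨(j : ℕ) + 1, by have := j.isLt; omega⟩ : Fin n)) ?_ ?_ ?_ ?_ ?_
    · intro a _; exact mem_univ _
    · intro a _
      refine mem_erase.mpr ⟨?_, mem_univ _⟩
      simp [Fin.ext_iff]
    · intro a ha
      have hane : (a : ℕ) ≠ 0 := by
        simpa [Fin.ext_iff] using (mem_erase.mp ha).1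
      exact Fin.ext (by simp; omega)
    · intro a _; exact Fin.ext (by simp)
    · intro a ha
      have hane : (a : ℕ) ≠ 0 := by
        simpa [Fin.ext_iff] using (mem_erase.mp ha).1
      rw [hv a hane, mul_comm ((X a : MvPolynomial (Fin n) k) ^ t) (c _), mul_assoc, Pprod a]
  rw [h2, add_mul]
  congr 1
  rw [← Finset.sum_mul, ← Pprod (⟨0, by omega⟩ : Fin n)]
  ring

/-- The Koszul-type complex `0 → R^{n−1} → R^n → R → R/I_{n,t} → 0` is exact:
the first map (given by the matrix with `−x_1^t` in the first row and `x_{j+1}^t`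
in position `(j+1, j)`) is injective, the complex is exact at `R^n`, and the
image of the second map (sending the `i`-th basis vector to `x^{e_i}`) is
exactly `I_{n,t}` (so that the induced sequence ending in `R/I_{n,t} → 0` is
exact); hence `R/I_{n,t}` has projective dimension at most `2`. -/
theorem stmt_14 (k : Type*) [Field k] (n t : ℕ) (hn : 3 ≤ n) (ht : 1 ≤ t) :
    Function.Injective (Matrix.toLin'
      (Matrix.of fun (i : Fin n) (j : Fin (n - 1)) =>
        if (i : ℕ) = 0 then -((X (⟨0, by omega⟩ : Fin n) : MvPolynomial (Fin n) k) ^ t)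
        else if (i : ℕ) = (j : ℕ) + 1 then (X i : MvPolynomial (Fin n) k) ^ t
        else 0)) ∧
    Function.Exact (Matrix.toLin'
      (Matrix.of fun (i : Fin n) (j : Fin (n - 1)) =>
        if (i : ℕ) = 0 then -((X (⟨0, by omega⟩ : Fin n) : MvPolynomial (Fin n) k) ^ t)
        else if (i : ℕ) = (j : ℕ) + 1 then (X i : MvPolynomial (Fin n) k) ^ t
        else 0))
      (∑ i : Fin n, LinearMap.smulRight (LinearMap.proj i : (Fin n → MvPolynomial (Fin n) k) →ₗ[MvPolynomial (Fin n) k] MvPolynomial (Fin n) k)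
        (∏ j ∈ Finset.univ.erase i, (X j : MvPolynomial (Fin n) k) ^ t)) ∧
    LinearMap.range (∑ i : Fin n, LinearMap.smulRight (LinearMap.proj i : (Fin n → MvPolynomial (Fin n) k) →ₗ[MvPolynomial (Fin n) k] MvPolynomial (Fin n) k)
        (∏ j ∈ Finset.univ.erase i, (X j : MvPolynomial (Fin n) k) ^ t))
      = Ideal.span (Set.range fun i : Fin n =>
          ∏ j ∈ Finset.univ.erase i, (X j : MvPolynomial (Fin n) k) ^ t) := by
  refine ⟨?_, ?_, ?_⟩
  · -- injectivity
    show Function.Injective (Matrix.toLin' (Mmat k n t hn))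
    rw [← LinearMap.ker_eq_bot, LinearMap.ker_eq_bot']
    intro c hc
    funext j
    have h0 : (Matrix.toLin' (Mmat k n t hn)) c ⟨(j : ℕ) + 1, by have := j.isLt; omega⟩ = 0 :=
      congrFun hc _
    rw [rowsucc hn c _ (by simp)] at h0
    rcases mul_eq_zero.mp h0 with h | h
    · exact absurd h (pow_ne_zero _ (X_ne_zero _))
    · exact h
  · -- exactness
    intro v
    constructor
    · intro hv0
      have hv : ∑ i : Fin n, v i * ∏ j ∈ Finset.univ.erase i, (X j : MvPolynomial (Fin n) k) ^ t
          = 0 := by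
        simpa only [Finset.sum_apply, LinearMap.smulRight_apply, LinearMap.proj_apply,
          smul_eq_mul] using hv0
      have hdvd : ∀ i : Fin n, ∃ w, (i : ℕ) ≠ 0 →
          v i = (X i : MvPolynomial (Fin n) k) ^ t * w := by
        intro i
        by_cases hi : (i : ℕ) = 0
        · exact ⟨0, fun h => absurd hi h⟩
        · have h1 : (X i : MvPolynomial (Fin n) k) ^ t
              ∣ v i * ∏ j ∈ Finset.univ.erase i, (X j : MvPolynomial (Fin n) k) ^ t := by
            have e0 := Finset.add_sum_erase univ
              (fun l => v l * ∏ j ∈ Finset.univ.erase l, (X j : MvPolynomial (Fin n) k) ^ t)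
              (mem_univ i)
            have e1 : v i * ∏ j ∈ Finset.univ.erase i, (X j : MvPolynomial (Fin n) k) ^ t
                = -∑ l ∈ Finset.univ.erase i,
                    v l * ∏ j ∈ Finset.univ.erase l, (X j : MvPolynomial (Fin n) k) ^ t :=
              eq_neg_of_add_eq_zero_left (e0.trans hv)
            rw [e1, dvd_neg]
            refine Finset.dvd_sum fun l hl => Dvd.dvd.mul_left ?_ _
            exact Finset.dvd_prod_of_mem _
              (mem_erase.mpr ⟨fun h => (mem_erase.mp hl).1 h.symm, mem_univ _⟩)
          exact ⟨_, fun _ =>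
            ((primeX i).pow_dvd_of_dvd_mul_right _ (notdvd i) h1).choose_spec⟩
      choose w hw using hdvd
      set c : Fin (n - 1) → MvPolynomial (Fin n) k :=
        fun j => w ⟨(j : ℕ) + 1, by have := j.isLt; omega⟩ with hcdef
      have hv' : ∀ i : Fin n, (i : ℕ) ≠ 0 →
          v i = (X i : MvPolynomial (Fin n) k) ^ t * c ⟨(i : ℕ) - 1, by have := i.isLt; omega⟩ := by
        intro i hi
        rw [hw i hi]
        congr 1
        rw [hcdef]
        congr 1
        exact Fin.ext (by simp; omega)
      have hkey := key hn c v hv'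
      rw [hv] at hkey
      have hfac : v ⟨0, by omega⟩
          + (X (⟨0, by omega⟩ : Fin n) : MvPolynomial (Fin n) k) ^ t * ∑ j, c j = 0 := by
        rcases mul_eq_zero.mp hkey.symm with h | h
        · exact h
        · exact absurd h (Finset.prod_ne_zero_iff.mpr fun j _ => pow_ne_zero _ (X_ne_zero _))
      have hv0' : v ⟨0, by omega⟩
          = -((X (⟨0, by omega⟩ : Fin n) : MvPolynomial (Fin n) k) ^ t * ∑ j, c j) :=
        eq_neg_of_add_eq_zero_left hfac
      refine ⟨c, ?_⟩
      show Matrix.toLin' (Mmat k n t hn) c = v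
      funext i
      by_cases hi : (i : ℕ) = 0
      · have hieq : i = ⟨0, by omega⟩ := Fin.ext hi
        rw [hieq, rowzero hn, hv0']
        ring
      · rw [rowsucc hn c i hi]
        exact (hv' i hi).symm
    · rintro ⟨c, rfl⟩
      simp only [Finset.sum_apply, LinearMap.smulRight_apply, LinearMap.proj_apply, smul_eq_mul]
      show ∑ i : Fin n, (Matrix.toLin' (Mmat k n t hn) c) i
          * ∏ j ∈ Finset.univ.erase i, (X j : MvPolynomial (Fin n) k) ^ t = 0
      rw [key hn c (Matrix.toLin' (Mmat k n t hn) c) (fun i hi => rowsucc hn c i hi),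
        rowzero hn]
      ring
  · -- range = span
    show LinearMap.range (psiMap k n t) = _
    apply le_antisymm
    · rintro x ⟨v, rfl⟩
      rw [psi_apply]
      exact Submodule.sum_mem _ fun i _ =>
        Ideal.mul_mem_left _ _ (Ideal.subset_span ⟨i, rfl⟩)
    · rw [Ideal.span_le]
      rintro x ⟨i, rfl⟩
      refine ⟨Pi.single i 1, ?_⟩
      rw [psi_apply]
      simp [Pi.single_apply, ite_mul]
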